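/- Suppose the block size is a finite B, so that under any bid vector at most B bids can be included, and hence among any n > B equal bids at least one has inclusion (hence confirmation) probability at most B/n. Then the only (possibly randomized) TFM satisfying UIC and 1-SCP is trivial: it confirms no transaction with positive probability (x ≡ 0) and pays the miner nothing (μ ≡ 0). -/

import Mathlib

/-- The (expected) joint utility of the coalition of the miner and the users in
`C` when the miner mines a block of `n` slots: slot `s` carries bid `bids s`
and is either a real user's transaction (`owner s = some u`; non-coalition
users bid truthfully) or a fake transaction of the miner (`owner s = none`,
true value `0`). Here `v` are the users' true values and the utility notion is
the standard one (value times confirmation probability, minus expected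
payment, plus miner revenue). -/
noncomputable def coalitionUtility
    (x p : (n : ℕ) → (Fin n → ℝ) → Fin n → ℝ)
    (μ : (n : ℕ) → (Fin n → ℝ) → ℝ)
    (m : ℕ) (v : Fin m → ℝ) (C : Finset (Fin m))
    (n : ℕ) (owner : Fin n → Option (Fin m)) (bids : Fin n → ℝ) : ℝ :=
  μ n bids + ∑ s : Fin n,
    (match owner s with
     | some u => if u ∈ C then v u * x n bids s - p n bids s else 0
     | none => 0 * x n bids s - p n bids s)

lemma coalitionUtility_id (x p : (n : ℕ) → (Fin n → ℝ) → Fin n → ℝ)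
    (μ : (n : ℕ) → (Fin n → ℝ) → ℝ) (m : ℕ) (v : Fin m → ℝ) (i : Fin m)
    (bids : Fin m → ℝ) :
    coalitionUtility x p μ m v {i} m (fun s => some s) bids
      = μ m bids + (v i * x m bids i - p m bids i) := by
  simp [coalitionUtility]

lemma muConst
    (x p : (n : ℕ) → (Fin n → ℝ) → Fin n → ℝ)
    (μ : (n : ℕ) → (Fin n → ℝ) → ℝ)
    (hx : ∀ n (b : Fin n → ℝ) (i : Fin n), 0 ≤ x n b i ∧ x n b i ≤ 1)
    (hUIC : ∀ n (b : Fin n → ℝ) (i : Fin n) (r : ℝ),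
      b i * x n (Function.update b i r) i - p n (Function.update b i r) i
        ≤ b i * x n b i - p n b i)
    (hSCP : ∀ (m : ℕ) (v : Fin m → ℝ) (i : Fin m)
        (n : ℕ) (owner : Fin n → Option (Fin m)) (bids : Fin n → ℝ),
      (∀ s t u, owner s = some u → owner t = some u → s = t) →
      (∀ s u, owner s = some u → u ≠ i → bids s = v u) →
      coalitionUtility x p μ m v {i} n owner bids
        ≤ coalitionUtility x p μ m v {i} m (fun s => some s) v)
    (m : ℕ) (v : Fin m → ℝ) (i : Fin m) (r : ℝ) :
    μ m (Function.update v i r) = μ m v := by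
  set X : ℝ → ℝ := fun t => x m (Function.update v i t) i with hX
  set P : ℝ → ℝ := fun t => p m (Function.update v i t) i with hP
  set g : ℝ → ℝ := fun t => μ m (Function.update v i t) with hg
  have hUIC' : ∀ s t : ℝ, s * X t - P t ≤ s * X s - P s := by
    intro s t
    have h := hUIC m (Function.update v i s) i t
    simpa [Function.update_idem] using h
  have hSCP' : ∀ s t : ℝ, g t + (s * X t - P t) ≤ g s + (s * X s - P s) := by
    intro s t
    have h := hSCP m (Function.update v i s) i m (fun k => some k)
        (Function.update v i t)
        (by intro a b u ha hb
            simp only [Option.some.injEq] at ha hb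
            exact ha.trans hb.symm)
        (by
          intro a u ha hu
          simp only [Option.some.injEq] at ha
          subst ha
          rw [Function.update_of_ne hu, Function.update_of_ne hu])
    rw [coalitionUtility_id, coalitionUtility_id] at h
    simp only [Function.update_idem, Function.update_self] at h
    simpa [hg, hX, hP, Function.update_idem] using h
  have hdiff : ∀ s t : ℝ, t ≤ s → |g s - g t| ≤ (s - t) * (X s - X t) := by
    intro s t hts
    have h1 : g t - g s ≤ (s * X s - P s) - (s * X t - P t) := by
      have := hSCP' s t; linarith
    have h2 : g s - g t ≤ (t * X t - P t) - (t * X s - P s) := by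
      have := hSCP' t s; linarith
    have h3 : 0 ≤ (s * X s - P s) - (s * X t - P t) := by
      have := hUIC' s t; linarith
    have h4 : 0 ≤ (t * X t - P t) - (t * X s - P s) := by
      have := hUIC' t s; linarith
    have hsum : ((s * X s - P s) - (s * X t - P t)) + ((t * X t - P t) - (t * X s - P s))
        = (s - t) * (X s - X t) := by ring
    rw [abs_sub_le_iff]
    constructor <;> linarith
  -- g is constant
  have hconst : ∀ a c : ℝ, a ≤ c → g c = g a := by
    intro a c hac
    have key : ∀ k : ℕ, 0 < k → |g c - g a| ≤ (c - a) / k := by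
      intro k hk
      set Δ : ℝ := (c - a) / k with hΔ
      have hkpos : (0:ℝ) < k := by exact_mod_cast hk
      have hΔ0 : 0 ≤ Δ := div_nonneg (by linarith) hkpos.le
      set t : ℕ → ℝ := fun j => a + j * Δ with ht
      have htel : g c - g a = ∑ j ∈ Finset.range k, (g (t (j+1)) - g (t j)) := by
        rw [Finset.sum_range_sub (fun j => g (t j))]
        have htk : t k = c := by
          simp only [ht, hΔ]; field_simp; ring
        have ht0 : t 0 = a := by simp [ht]
        rw [htk, ht0]
      have hXtel : ∑ j ∈ Finset.range k, (X (t (j+1)) - X (t j)) = X c - X a := by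
        rw [Finset.sum_range_sub (fun j => X (t j))]
        have htk : t k = c := by simp only [ht, hΔ]; field_simp; ring
        have ht0 : t 0 = a := by simp [ht]
        rw [htk, ht0]
      calc |g c - g a| ≤ ∑ j ∈ Finset.range k, |g (t (j+1)) - g (t j)| := by
              rw [htel]; exact Finset.abs_sum_le_sum_abs _ _
        _ ≤ ∑ j ∈ Finset.range k, Δ * (X (t (j+1)) - X (t j)) := by
              apply Finset.sum_le_sum
              intro j _
              have hstep : t j ≤ t (j+1) := by
                simp only [ht]; push_cast; nlinarith
              have := hdiff (t (j+1)) (t j) hstep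
              have heq : t (j+1) - t j = Δ := by simp only [ht]; push_cast; ring
              rwa [heq] at this
        _ = Δ * (X c - X a) := by rw [← Finset.mul_sum, hXtel]
        _ ≤ Δ * 1 := by
              apply mul_le_mul_of_nonneg_left _ hΔ0
              have := (hx m (Function.update v i c) i).2
              have := (hx m (Function.update v i a) i).1
              simp only [hX]; linarith
        _ = (c - a) / k := by rw [mul_one]
    have : |g c - g a| ≤ 0 := by
      by_contra hlt
      push_neg at hlt
      obtain ⟨k, hk⟩ := exists_nat_gt ((c - a) / |g c - g a|)
      have hkpos : 0 < k := by
        by_contra h0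
        push_neg at h0
        interval_cases k
        simp at hk
        nlinarith [abs_nonneg (g c - g a), div_nonneg (sub_nonneg.2 hac) (le_of_lt hlt)]
      have h1 := key k hkpos
      have hkpos' : (0:ℝ) < k := by exact_mod_cast hkpos
      have : (c - a) < k * |g c - g a| := by
        rw [div_lt_iff₀ hlt] at hk; linarith
      have : (c - a) / k < |g c - g a| := by
        rw [div_lt_iff₀ hkpos']; linarith
      linarith
    have h0 : g c - g a = 0 := abs_eq_zero.mp (le_antisymm this (abs_nonneg _))
    linarith
  have hle : g r = g (v i) := by
    rcases le_total (v i) r with h | h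
    · exact hconst (v i) r h
    · exact (hconst r (v i) h).symm
  simp only [hg] at hle
  rwa [Function.update_eq_self] at hle
section
variable
    (B : ℕ)
    (x p : (n : ℕ) → (Fin n → ℝ) → Fin n → ℝ)
    (μ : (n : ℕ) → (Fin n → ℝ) → ℝ)
    (hx : ∀ n (b : Fin n → ℝ) (i : Fin n), 0 ≤ x n b i ∧ x n b i ≤ 1)
    (hp : ∀ n (b : Fin n → ℝ) (i : Fin n), 0 ≤ p n b i ∧ p n b i ≤ b i * x n b i)
    (hμ : ∀ n (b : Fin n → ℝ), 0 ≤ μ n b ∧ μ n b ≤ ∑ i, p n b i)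
    (hblock : ∀ n (b : Fin n → ℝ), ∑ i, x n b i ≤ (B : ℝ))
    (hUIC : ∀ n (b : Fin n → ℝ) (i : Fin n) (r : ℝ),
      b i * x n (Function.update b i r) i - p n (Function.update b i r) i
        ≤ b i * x n b i - p n b i)
    (hSCP : ∀ (m : ℕ) (v : Fin m → ℝ) (i : Fin m)
        (n : ℕ) (owner : Fin n → Option (Fin m)) (bids : Fin n → ℝ),
      (∀ s t u, owner s = some u → owner t = some u → s = t) →
      (∀ s u, owner s = some u → u ≠ i → bids s = v u) →
      coalitionUtility x p μ m v {i} n owner bids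
        ≤ coalitionUtility x p μ m v {i} m (fun s => some s) v)

include hp hμ hx hUIC hSCP in
lemma muZero (m : ℕ) (b : Fin m → ℝ) : μ m b = 0 := by
  have hstep : ∀ S : Finset (Fin m),
      μ m (fun j => if j ∈ S then b j else 0) = μ m (fun _ => 0) := by
    intro S
    induction S using Finset.induction_on with
    | empty => simp
    | @insert a S ha ih =>
      have heq : (fun j => if j ∈ insert a S then b j else 0)
          = Function.update (fun j => if j ∈ S then b j else 0) a (b a) := by
        funext j
        by_cases hj : j = a
        · subst hj; simp [Function.update_self, ha]
        · simp [Function.update_of_ne hj, Finset.mem_insert, hj]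
      rw [heq, muConst x p μ hx hUIC hSCP, ih]
  have h1 := hstep Finset.univ
  simp only [Finset.mem_univ, if_true] at h1
  have h2 : μ m (fun _ => 0) = 0 := by
    have h := hμ m (fun _ => 0)
    have hps : ∑ i, p m (fun _ => 0) i ≤ 0 := by
      apply Finset.sum_nonpos
      intro i _
      simpa using (hp m (fun _ => 0) i).2
    linarith [h.1, h.2]
  exact h1.trans h2

include hp hμ hx hblock hUIC hSCP in
lemma xZero (m : ℕ) (b : Fin m → ℝ) (i : Fin m) : x m b i = 0 := by
  have hx0 := (hx m b i).1
  rcases lt_or_ge (b i) 0 with hbi | hbi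
  · rcases eq_or_lt_of_le hx0 with h | h
    · exact h.symm
    · exfalso
      have h1 := (hp m b i).1
      have h2 := (hp m b i).2
      nlinarith
  · have key : ∀ n : ℕ, 0 < n → x m b i ≤ (b i + 1) * B / n := by
      intro n hn
      have hnR : (0:ℝ) < n := by exact_mod_cast hn
      set v' : Fin (m+n) → ℝ := fun j => if h : (j:ℕ) < m then b ⟨j, h⟩ else b i + 1
        with hv'
      obtain ⟨j, hjm, hjx⟩ : ∃ j : Fin (m+n), m ≤ (j:ℕ) ∧ x (m+n) v' j ≤ B / n := by
        by_contra hcon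
        push_neg at hcon
        set T : Finset (Fin (m+n)) := Finset.univ.filter (fun j => m ≤ (j:ℕ)) with hT
        have hmemT : ∀ j : Fin (m+n), j ∈ T ↔ m ≤ (j:ℕ) := by
          intro j; simp [hT]
        have hcard : T.card = n := by
          have : T = Finset.image (Fin.natAdd m) Finset.univ := by
            apply Finset.ext
            intro j
            simp only [hmemT, Finset.mem_image, Finset.mem_univ, true_and]
            constructor
            · intro hj
              refine ⟨⟨(j:ℕ) - m, by omega⟩, ?_⟩
              apply Fin.ext
              simp [Fin.natAdd]
              omega
            · rintro ⟨k, rfl⟩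
              simp [Fin.natAdd]
          rw [this, Finset.card_image_of_injective _ (fun a b h => by
            apply Fin.ext
            have := congrArg Fin.val h
            simpa [Fin.natAdd] using this)]
          simp
        have hne : T.Nonempty := by
          refine ⟨Fin.natAdd m ⟨0, hn⟩, ?_⟩
          rw [hmemT]
          simp [Fin.natAdd]
        have hlt : ∑ j ∈ T, ((B:ℝ)/n) < ∑ j ∈ T, x (m+n) v' j := by
          apply Finset.sum_lt_sum_of_nonempty hne
          intro j hj
          exact hcon j ((hmemT j).mp hj)
        have hconst : ∑ j ∈ T, ((B:ℝ)/n) = (B:ℝ) := by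
          rw [Finset.sum_const, hcard, nsmul_eq_mul]
          field_simp
        have hsum : ∑ j ∈ T, x (m+n) v' j ≤ (B:ℝ) := by
          calc ∑ j ∈ T, x (m+n) v' j ≤ ∑ j : Fin (m+n), x (m+n) v' j :=
                Finset.sum_le_sum_of_subset_of_nonneg (Finset.subset_univ T)
                  (fun j _ _ => (hx _ _ j).1)
            _ ≤ (B:ℝ) := hblock _ _
        linarith
      -- the collusion deviation
      set owner : Fin m → Option (Fin (m+n)) :=
        fun s => if s = i then some j else some (Fin.castAdd n s) with howner
      have hcast : ∀ s : Fin m, (Fin.castAdd n s : Fin (m+n)) ≠ j := by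
        intro s heq
        have := congrArg Fin.val heq
        simp [Fin.castAdd] at this
        omega
      have hinj : ∀ s t u, owner s = some u → owner t = some u → s = t := by
        intro s t u hs ht
        by_cases hsi : s = i <;> by_cases hti : t = i <;>
          simp [howner, hsi, hti] at hs ht
        · exact hsi.trans hti.symm
        · exact absurd (ht.trans hs.symm) (hcast t)
        · exact absurd (hs.trans ht.symm) (hcast s)
        · exact Fin.castAdd_injective m n (hs.trans ht.symm)
      have htruth : ∀ s u, owner s = some u → u ≠ j → b s = v' u := by
        intro s u hs hu
        by_cases hsi : s = i
        · simp only [howner, hsi, if_pos] at hs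
          simp only [Option.some.injEq] at hs
          exact absurd hs.symm hu
        · simp only [howner, hsi, if_neg, ite_false, Option.some.injEq] at hs
          subst hs
          have hlt : ((Fin.castAdd n s : Fin (m+n)) : ℕ) < m := by
            simpa using s.isLt
          rw [hv']
          simp only [hlt, dif_pos]
          congr 1
      have h := hSCP (m+n) v' j m owner b hinj htruth
      rw [coalitionUtility_id] at h
      have hLHS : coalitionUtility x p μ (m+n) v' {j} m owner b
          = μ m b + (v' j * x m b i - p m b i) := by
        unfold coalitionUtility
        congr 1
        rw [Finset.sum_congr rfl (g := fun s => if s = i then v' j * x m b s - p m b s else 0)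
          (by
            intro s _
            by_cases hsi : s = i
            · subst hsi; simp [howner]
            · simp [howner, hsi, hcast s])]
        simp
      rw [hLHS] at h
      have hvj : v' j = b i + 1 := by
        rw [hv']
        simp only [dif_neg (by omega : ¬ (j:ℕ) < m)]
      rw [hvj] at h
      have hμ1 : μ m b = 0 := muZero x p μ hx hp hμ hUIC hSCP m b
      have hμ2 : μ (m+n) v' = 0 := muZero x p μ hx hp hμ hUIC hSCP _ v'
      have hp1 := (hp m b i).2
      have hp2' := (hp (m+n) v' j).1
      have hbpos : (0:ℝ) < b i + 1 := by linarith
      have hstep : (b i + 1) * x (m+n) v' j ≤ (b i + 1) * ((B:ℝ)/n) :=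
        mul_le_mul_of_nonneg_left hjx hbpos.le
      rw [hμ1, hμ2] at h
      have : x m b i ≤ (b i + 1) * ((B:ℝ)/n) := by nlinarith
      rw [mul_div_assoc]
      exact this
    by_contra hne
    have hxpos : 0 < x m b i := lt_of_le_of_ne hx0 (Ne.symm hne)
    have hC : (0:ℝ) ≤ (b i + 1) * B := by positivity
    obtain ⟨k, hk⟩ := exists_nat_gt ((b i + 1) * B / x m b i)
    have hkpos : 0 < k + 1 := Nat.succ_pos k
    have h1 := key (k+1) hkpos
    have hkR : ((b i + 1) * B / x m b i) < (k+1 : ℝ) := by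
      push_cast
      push_cast at hk
      linarith
    have h2 : (b i + 1) * B < (k+1 : ℝ) * x m b i := by
      rw [div_lt_iff₀ hxpos] at hkR
      linarith
    have h3 : (b i + 1) * B / (k+1 : ℝ) < x m b i := by
      rw [div_lt_iff₀ (by positivity)]
      linarith
    have : ((k:ℝ)+1) = ((k+1 : ℕ) : ℝ) := by push_cast; ring
    rw [this] at h3
    linarith

end

/-- **Finite block size: UIC + 1-SCP force the trivial TFM.**
Suppose each block confirms at most `B` transactions in expectation
(`Σᵢ xᵢ(b) ≤ B` for all bid vectors of all lengths).  If the (possibly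
randomized) TFM family `(x, p, μ)` is UIC and 1-SCP — where the coalition of
the miner and a single user may have the user bid untruthfully and the miner
assemble an arbitrary block out of real users' transactions and fake
transactions — then the mechanism is trivial: no transaction is ever confirmed
with positive probability and the miner is always paid nothing. -/
theorem finite_block_size_trivial_mechanism
    (B : ℕ)
    (x p : (n : ℕ) → (Fin n → ℝ) → Fin n → ℝ)
    (μ : (n : ℕ) → (Fin n → ℝ) → ℝ)
    (hx : ∀ n (b : Fin n → ℝ) (i : Fin n), 0 ≤ x n b i ∧ x n b i ≤ 1)
    (hp : ∀ n (b : Fin n → ℝ) (i : Fin n), 0 ≤ p n b i ∧ p n b i ≤ b i * x n b i)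
    (hμ : ∀ n (b : Fin n → ℝ), 0 ≤ μ n b ∧ μ n b ≤ ∑ i, p n b i)
    -- finite block size: at most B transactions confirmed (in expectation)
    (hblock : ∀ n (b : Fin n → ℝ), ∑ i, x n b i ≤ (B : ℝ))
    -- UIC
    (hUIC : ∀ n (b : Fin n → ℝ) (i : Fin n) (r : ℝ),
      b i * x n (Function.update b i r) i - p n (Function.update b i r) i
        ≤ b i * x n b i - p n b i)
    -- 1-SCP
    (hSCP : ∀ (m : ℕ) (v : Fin m → ℝ) (i : Fin m)
        (n : ℕ) (owner : Fin n → Option (Fin m)) (bids : Fin n → ℝ),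
      (∀ s t u, owner s = some u → owner t = some u → s = t) →
      (∀ s u, owner s = some u → u ≠ i → bids s = v u) →
      coalitionUtility x p μ m v {i} n owner bids
        ≤ coalitionUtility x p μ m v {i} m (fun s => some s) v) :
    ∀ (m : ℕ) (b : Fin m → ℝ), μ m b = 0 ∧ ∀ i, x m b i = 0 := by
  intro m b
  refine ⟨muZero x p μ hx hp hμ hUIC hSCP m b, fun i => xZero B x p μ hx hp hμ hblock hUIC hSCP m b i⟩
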